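/- Every pointed simplicial set that admits a cyclic ordering admits an NNCMO: the cyclic ordering, restricted to fibers of compositions of face maps (over non-basepoint simplices), gives fiber orderings such that for any factorization g∘f of a composite of face maps, the composition induced ordering agrees with the (g∘f)-ordering on all fibers over non-basepoint simplices. -/

import Mathlib

open CategoryTheory Opposite

/-- A pointed simplicial set: a simplicial set together with a basepoint simplex in each
degree, compatible with all simplicial structure maps. -/
structure PointedSSet where
  X : SSet
  pt : ∀ n : SimplexCategoryᵒᵖ, X.obj n
  pt_map : ∀ {n n' : SimplexCategoryᵒᵖ} (f : n ⟶ n'), X.map f (pt n) = pt n'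

/-- An `f`-ordering: a relation `r` on the domain of `f` which only relates elements of
a common fiber of `f` and restricts to a strict linear order on each fiber of `f`. -/
def IsFiberLinearOrder {α β : Type*} (f : α → β) (r : α → α → Prop) : Prop :=
  (∀ x y, r x y → f x = f y) ∧
  (∀ x, ¬ r x x) ∧
  (∀ x y z, r x y → r y z → r x z) ∧
  (∀ x y, f x = f y → x ≠ y → r x y ∨ r y x)

/-- The composition induced relation on fibers of `g ∘ f`. -/
def compInduced {α β : Type*} (f : α → β) (rf : α → α → Prop) (rg : β → β → Prop) :
    α → α → Prop :=
  fun x y => (f x = f y ∧ rf x y) ∨ (f x ≠ f y ∧ rg (f x) (f y))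

/-- A pointed simplicial set admits a not necessarily commutative multiplicative
ordering (NNCMO) if there is a choice, for every composition of face maps (i.e. every
monomorphism of the simplex category), of a linear order on each fiber, such that for
every factorization of a composition of face maps, the composition induced ordering
agrees with the chosen ordering on all fibers over non-basepoint simplices. -/
def PointedSSet.AdmitsNNCMO (Y : PointedSSet) : Prop :=
  ∃ R : ∀ (a b : SimplexCategory), (a ⟶ b) →
      (Y.X.obj (op b) → Y.X.obj (op b) → Prop),
    (∀ (a b : SimplexCategory) (f : a ⟶ b), Mono f →
      IsFiberLinearOrder (Y.X.map f.op) (R a b f)) ∧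
    (∀ (a b c : SimplexCategory) (u : a ⟶ b) (v : b ⟶ c), Mono u → Mono v →
      ∀ x y : Y.X.obj (op c),
        Y.X.map (u ≫ v).op x = Y.X.map (u ≫ v).op y →
        Y.X.map (u ≫ v).op x ≠ Y.pt (op a) →
        (R a c (u ≫ v) x y ↔ compInduced (Y.X.map v.op) (R b c v) (R a b u) x y))

/-- A simplex is degenerate if it is in the image of some degeneracy map. -/
def PointedSSet.Degenerate (Y : PointedSSet) {n : ℕ}
    (x : Y.X.obj (op (SimplexCategory.mk (n + 1)))) : Prop :=
  ∃ (i : Fin (n + 1)) (y : Y.X.obj (op (SimplexCategory.mk n))), x = Y.X.σ i y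

/-- A pointed simplicial set is one dimensional if every simplex of dimension at least
`2` is degenerate. -/
def PointedSSet.OneDimensional (Y : PointedSSet) : Prop :=
  ∀ (n : ℕ) (x : Y.X.obj (op (SimplexCategory.mk (n + 2)))), Y.Degenerate x

/-- `lt` is a cyclic ordering on the pointed simplicial set `Y`: in every positive
degree, `lt` is a strict linear order on the nonbasepoint simplices, and for `n ≥ 2`,
`σ < τ` implies `d_i(σ) ≤ d_i(τ)` for all `i`, where the basepoint is taken to be the
minimum of each degree. -/
def PointedSSet.IsCyclicOrdering (Y : PointedSSet)
    (lt : ∀ n : ℕ, Y.X.obj (op (SimplexCategory.mk n)) →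
      Y.X.obj (op (SimplexCategory.mk n)) → Prop) : Prop :=
  (∀ n, 1 ≤ n →
    (∀ x, ¬ lt n x x) ∧
    (∀ x y z, lt n x y → lt n y z → lt n x z) ∧
    (∀ x y, lt n x y →
      x ≠ Y.pt (op (SimplexCategory.mk n)) ∧ y ≠ Y.pt (op (SimplexCategory.mk n))) ∧
    (∀ x y, x ≠ Y.pt (op (SimplexCategory.mk n)) → y ≠ Y.pt (op (SimplexCategory.mk n)) →
      x ≠ y → lt n x y ∨ lt n y x)) ∧
  (∀ (m : ℕ) (i : Fin (m + 3)) (σ τ : Y.X.obj (op (SimplexCategory.mk (m + 2)))),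
    lt (m + 2) σ τ →
      (Y.X.δ i σ = Y.pt (op (SimplexCategory.mk (m + 1))) ∨
       Y.X.δ i σ = Y.X.δ i τ ∨
       lt (m + 1) (Y.X.δ i σ) (Y.X.δ i τ)))

/-- `Y` has a cyclic ordering. -/
def PointedSSet.HasCyclicOrdering (Y : PointedSSet) : Prop :=
  ∃ lt, Y.IsCyclicOrdering lt


section NNCMOAux

variable {Y : PointedSSet}
  {lt : ∀ n : ℕ, Y.X.obj (op (SimplexCategory.mk n)) →
      Y.X.obj (op (SimplexCategory.mk n)) → Prop}

/-- The basepoint-extended order in each degree: in degree `0` the empty relation,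
in positive degrees `lt` extended by making the basepoint minimal. -/
def NNCMO.PE (Y : PointedSSet)
    (lt : ∀ n : ℕ, Y.X.obj (op (SimplexCategory.mk n)) →
      Y.X.obj (op (SimplexCategory.mk n)) → Prop) :
    ∀ n : ℕ, Y.X.obj (op (SimplexCategory.mk n)) →
      Y.X.obj (op (SimplexCategory.mk n)) → Prop
  | 0 => fun _ _ => False
  | (n+1) => fun x y =>
      (x = Y.pt (op (SimplexCategory.mk (n+1))) ∧ y ≠ Y.pt (op (SimplexCategory.mk (n+1)))) ∨
      lt (n+1) x y

lemma NNCMO.pe_irrefl (hlt : Y.IsCyclicOrdering lt) :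
    ∀ (n : ℕ) x, ¬ NNCMO.PE Y lt n x x := by
  rintro (_ | n) x h
  · exact h
  · rcases h with ⟨h1, h2⟩ | h
    · exact h2 h1
    · exact (hlt.1 (n+1) (by omega)).1 x h

lemma NNCMO.pe_trans (hlt : Y.IsCyclicOrdering lt) :
    ∀ (n : ℕ) x y z, NNCMO.PE Y lt n x y → NNCMO.PE Y lt n y z → NNCMO.PE Y lt n x z := by
  rintro (_ | n) x y z hxy hyz
  · exact hxy.elim
  · obtain ⟨h1, _, h3, _⟩ := hlt.1 (n+1) (by omega)
    rcases hxy with ⟨hx, hy⟩ | hxy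
    · rcases hyz with ⟨hy', _⟩ | hyz
      · exact absurd hy' hy
      · exact Or.inl ⟨hx, (h3 _ _ hyz).2⟩
    · rcases hyz with ⟨hy', _⟩ | hyz
      · exact absurd hy' (h3 _ _ hxy).2
      · exact Or.inr ((hlt.1 (n+1) (by omega)).2.1 _ _ _ hxy hyz)

lemma NNCMO.pe_total (hlt : Y.IsCyclicOrdering lt) :
    ∀ (n : ℕ), 1 ≤ n → ∀ x y, x ≠ y →
      NNCMO.PE Y lt n x y ∨ NNCMO.PE Y lt n y x := by
  rintro (_ | n) hn x y hne
  · omega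
  · by_cases hx : x = Y.pt (op (SimplexCategory.mk (n+1)))
    · exact Or.inl (Or.inl ⟨hx, fun hy => hne (hx.trans hy.symm)⟩)
    · by_cases hy : y = Y.pt (op (SimplexCategory.mk (n+1)))
      · exact Or.inr (Or.inl ⟨hy, hx⟩)
      · rcases (hlt.1 (n+1) (by omega)).2.2.2 x y hx hy hne with h | h
        · exact Or.inl (Or.inr h)
        · exact Or.inr (Or.inr h)

lemma NNCMO.pe_lt :
    ∀ (n : ℕ) x y, x ≠ Y.pt (op (SimplexCategory.mk n)) →
      NNCMO.PE Y lt n x y → lt n x y := by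
  rintro (_ | n) x y hx h
  · exact h.elim
  · rcases h with ⟨h1, _⟩ | h
    · exact absurd h1 hx
    · exact h

lemma NNCMO.lt_pe :
    ∀ (n : ℕ), 1 ≤ n → ∀ x y, lt n x y → NNCMO.PE Y lt n x y := by
  rintro (_ | n) hn x y h
  · omega
  · exact Or.inr h

lemma NNCMO.key (hlt : Y.IsCyclicOrdering lt) :
    ∀ (m : ℕ) (b : SimplexCategory) (v : b ⟶ SimplexCategory.mk m), Mono v → 1 ≤ b.len →
      ∀ x y, lt m x y →
        Y.X.map v.op x = Y.pt (op b) ∨ Y.X.map v.op x = Y.X.map v.op y ∨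
        lt b.len (Y.X.map v.op x) (Y.X.map v.op y) := by
  intro m
  induction m using Nat.strong_induction_on with
  | _ m IH =>
    intro b v hv hb x y hxy
    by_cases hbm : b.len = m
    · obtain rfl : SimplexCategory.mk m = b := SimplexCategory.ext (by simpa using hbm.symm)
      have hid : v = 𝟙 _ := @SimplexCategory.eq_id_of_mono _ v hv
      subst hid
      rw [op_id, Y.X.map_id]
      exact Or.inr (Or.inr hxy)
    · have hle : b.len ≤ m := SimplexCategory.len_le_of_mono v
      have hlt2 : b.len < m := lt_of_le_of_ne hle hbm
      obtain ⟨k, rfl⟩ : ∃ k, m = k + 2 := ⟨m - 2, by omega⟩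
      have hns : ¬ Function.Surjective v.toOrderHom := by
        intro hs
        have := Fintype.card_le_of_surjective _ hs
        simp [SimplexCategory.len_mk] at this
        omega
      obtain ⟨i, v', hfac⟩ := SimplexCategory.eq_comp_δ_of_not_surjective v hns
      have hmono' : Mono v' := by
        have : Mono (v' ≫ SimplexCategory.δ i) := hfac ▸ hv
        exact mono_of_mono v' (SimplexCategory.δ i)
      have hmap : ∀ z, Y.X.map v.op z = Y.X.map v'.op (Y.X.δ i z) := by
        intro z
        rw [hfac]
        simp [SimplicialObject.δ, op_comp, FunctorToTypes.map_comp_apply]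
      rcases hlt.2 k i x y hxy with hpt | heq | hlt3
      · left
        rw [hmap, hpt, Y.pt_map]
      · right; left
        rw [hmap, hmap, heq]
      · rw [hmap x, hmap y]
        exact IH (k+1) (by omega) b v' hmono' hb _ _ hlt3

/-- A mono into an object of length `0` is the identity (up to the induced equality
of objects); in particular the corresponding map of simplices is injective. -/
lemma NNCMO.map_inj_of_len_zero {a b : SimplexCategory} (f : a ⟶ b) (hf : Mono f)
    (hb : b.len = 0) : Function.Injective (Y.X.map f.op) := by
  have ha : a.len = 0 := by
    have := SimplexCategory.len_le_of_mono f
    omega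
  obtain rfl : a = b := SimplexCategory.ext (by omega)
  have hid : f = 𝟙 _ := @SimplexCategory.eq_id_of_mono _ f hf
  subst hid
  rw [op_id, Y.X.map_id]
  exact fun x y h => h

end NNCMOAux

/-- Every pointed simplicial set that admits a cyclic ordering admits an NNCMO. -/
theorem cyclicOrdering_admitsNNCMO (Y : PointedSSet) (h : Y.HasCyclicOrdering) :
    Y.AdmitsNNCMO := by
  obtain ⟨lt, hlt⟩ := h
  refine ⟨fun a b f x y => Y.X.map f.op x = Y.X.map f.op y ∧ NNCMO.PE Y lt b.len x y,
    ?_, ?_⟩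
  · intro a b f hf
    refine ⟨fun x y h => h.1, fun x h => NNCMO.pe_irrefl hlt b.len x h.2,
      fun x y z h1 h2 => ⟨h1.1.trans h2.1, NNCMO.pe_trans hlt b.len x y z h1.2 h2.2⟩, ?_⟩
    intro x y hfib hne
    rcases Nat.eq_zero_or_pos b.len with hb | hb
    · exact absurd (NNCMO.map_inj_of_len_zero f hf hb hfib) hne
    · rcases NNCMO.pe_total hlt b.len hb x y hne with h | h
      · exact Or.inl ⟨hfib, h⟩
      · exact Or.inr ⟨hfib.symm, h⟩
  · intro a b c u v hu hv x y F np
    have hcomp : ∀ z, Y.X.map (u ≫ v).op z = Y.X.map u.op (Y.X.map v.op z) := by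
      intro z
      rw [op_comp, FunctorToTypes.map_comp_apply]
    have hX1 : Y.X.map v.op x ≠ Y.pt (op b) := fun hh => np (by rw [hcomp, hh, Y.pt_map])
    have hY1 : Y.X.map v.op y ≠ Y.pt (op b) := fun hh => (F ▸ np) (by rw [hcomp, hh, Y.pt_map])
    have hx : x ≠ Y.pt (op c) := fun hh => hX1 (by rw [hh, Y.pt_map])
    have hy : y ≠ Y.pt (op c) := fun hh => hY1 (by rw [hh, Y.pt_map])
    have Fuv : Y.X.map u.op (Y.X.map v.op x) = Y.X.map u.op (Y.X.map v.op y) := by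
      rw [← hcomp, ← hcomp]; exact F
    by_cases hXY : Y.X.map v.op x = Y.X.map v.op y
    · constructor
      · rintro ⟨-, hpe⟩
        exact Or.inl ⟨hXY, hXY, hpe⟩
      · rintro (⟨-, -, hpe⟩ | ⟨hne, -⟩)
        · exact ⟨F, hpe⟩
        · exact absurd hXY hne
    · have hb : 1 ≤ b.len := by
        rcases Nat.eq_zero_or_pos b.len with hb0 | hb0
        · exact absurd (NNCMO.map_inj_of_len_zero u hu hb0 Fuv) hXY
        · exact hb0
      have hc : 1 ≤ c.len := le_trans hb (SimplexCategory.len_le_of_mono v)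
      have hkey : ∀ x' y' : Y.X.obj (op c), lt c.len x' y' →
          Y.X.map v.op x' = Y.pt (op b) ∨ Y.X.map v.op x' = Y.X.map v.op y' ∨
          lt b.len (Y.X.map v.op x') (Y.X.map v.op y') :=
        fun x' y' hh => NNCMO.key hlt c.len b v hv hb x' y' hh
      obtain ⟨hirr, htr, -, -⟩ := hlt.1 b.len hb
      constructor
      · rintro ⟨-, hpe⟩
        have hltc : lt c.len x y := NNCMO.pe_lt c.len x y hx hpe
        rcases hkey x y hltc with h1 | h2 | h3
        · exact absurd h1 hX1
        · exact absurd h2 hXY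
        · exact Or.inr ⟨hXY, Fuv, NNCMO.lt_pe b.len hb _ _ h3⟩
      · rintro (⟨h1, -⟩ | ⟨-, -, hpe⟩)
        · exact absurd h1 hXY
        · have hltb : lt b.len (Y.X.map v.op x) (Y.X.map v.op y) :=
            NNCMO.pe_lt b.len _ _ hX1 hpe
          have hne : x ≠ y := fun hh => hXY (by rw [hh])
          refine ⟨F, ?_⟩
          rcases NNCMO.pe_total hlt c.len hc x y hne with h | h
          · exact h
          · exfalso
            have hltc : lt c.len y x := NNCMO.pe_lt c.len y x hy h
            rcases hkey y x hltc with h1 | h2 | h3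
            · exact hY1 h1
            · exact hXY h2.symm
            · exact hirr _ (htr _ _ _ hltb h3)
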